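/- Let δ > 0 and n ∈ ℕ. Define the modified extremal quantity over all finite positive (not necessarily probability) measures μ on 𝕋 satisfying μ(A) ≥ (δ/(2π))·|A| for every Borel set A: \tilde{M}_{n,δ} = sup_μ ‖φ_n(·;μ)‖_{L^∞(𝕋)}. Then \tilde{M}_{n,δ} = √((n+1)/δ); that is, (i) every such μ satisfies ‖φ_n(·;μ)‖_{L^∞(𝕋)} ≤ √((n+1)/δ), and (ii) for every ε > 0 there exists such a measure μ with φ_n(1;μ) > √((n+1)/δ) − ε. -/

import Mathlib

open MeasureTheory Polynomial ComplexConjugate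

/-- Arclength measure on the unit circle `{z : ℂ | |z| = 1}`, of total mass `2π`. -/
noncomputable def arcMeasure : Measure ℂ :=
  (volume.restrict (Set.Ioc (-Real.pi) Real.pi)).map (fun θ : ℝ => Complex.exp (Complex.I * θ))

/-- A measure on `ℂ` is supported on the unit circle. -/
def OnCircle (μ : Measure ℂ) : Prop := μ {z : ℂ | ‖z‖ ≠ 1} = 0

/-- The Steklov-type density condition `μ(A) ≥ (δ/(2π))·|A|` for all Borel `A`
(no probability normalization). -/
def SteklovDensity (δ : ℝ) (μ : Measure ℂ) : Prop :=
  ∀ A : Set ℂ, MeasurableSet A →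
    ENNReal.ofReal (δ / (2 * Real.pi)) * arcMeasure A ≤ μ A

/-- `φ` is the `n`-th orthonormal polynomial of the measure `μ`. -/
def IsOrthonormalPoly (μ : Measure ℂ) (n : ℕ) (φ : Polynomial ℂ) : Prop :=
  φ.natDegree = n ∧ (∃ r : ℝ, 0 < r ∧ φ.coeff n = (r : ℂ)) ∧
    (∀ j < n, ∫ z, φ.eval z * conj (z ^ j) ∂μ = 0) ∧
    ∫ z, ‖φ.eval z‖ ^ 2 ∂μ = 1

lemma mexp_cont : Continuous (fun θ : ℝ => Complex.exp (Complex.I * θ)) := by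
  continuity

lemma mexp_meas : Measurable (fun θ : ℝ => Complex.exp (Complex.I * θ)) := mexp_cont.measurable

instance : IsFiniteMeasure (volume.restrict (Set.Ioc (-Real.pi) Real.pi)) := by
  constructor
  rw [Measure.restrict_apply_univ]
  exact measure_Ioc_lt_top

instance : IsFiniteMeasure arcMeasure := Measure.isFiniteMeasure_map _ _

lemma integral_arc {E : Type*} [NormedAddCommGroup E] [NormedSpace ℝ E]
    (f : ℂ → E) (hf : Continuous f) :
    ∫ z, f z ∂arcMeasure = ∫ θ in Set.Ioc (-Real.pi) Real.pi, f (Complex.exp (Complex.I * θ)) := by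
  rw [arcMeasure, integral_map mexp_meas.aemeasurable hf.aestronglyMeasurable]

lemma integrable_arc {E : Type*} [NormedAddCommGroup E]
    (f : ℂ → E) (hf : Continuous f) : Integrable f arcMeasure := by
  rw [arcMeasure, integrable_map_measure hf.aestronglyMeasurable mexp_meas.aemeasurable]
  exact (hf.comp mexp_cont).integrableOn_Ioc

lemma arc_exp_int (m : ℤ) :
    ∫ θ in Set.Ioc (-Real.pi) Real.pi, Complex.exp ((Complex.I * m) * θ)
      = if m = 0 then (2 * Real.pi : ℂ) else 0 := by
  have hpi : (-Real.pi) ≤ Real.pi := by linarith [Real.pi_pos]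
  rw [← intervalIntegral.integral_of_le hpi]
  by_cases hm : m = 0
  · simp [hm, intervalIntegral.integral_const]
    push_cast
    ring
  · rw [if_neg hm]
    have hc : (Complex.I * m) ≠ 0 := by
      simp [Complex.I_ne_zero, Complex.ext_iff]
      exact_mod_cast hm
    rw [integral_exp_mul_complex hc]
    have h1 : ∀ s : ℝ, Complex.I * m * s = m * (s * Complex.I) := by intro s; ring
    have key : ∀ s : ℝ, Complex.exp (Complex.I * m * s) = Complex.exp (s * Complex.I) ^ m := by
      intro s
      rw [h1, Complex.exp_int_mul]
    rw [key, key]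
    push_cast
    rw [Complex.exp_pi_mul_I]
    have : Complex.exp (-(Real.pi:ℂ) * Complex.I) = -1 := by
      rw [neg_mul, Complex.exp_neg, Complex.exp_pi_mul_I]
      norm_num
    rw [this]
    have : ((-1 : ℂ)) ^ m - (-1 : ℂ) ^ m = 0 := by ring
    simp [this]

lemma arc_monomial (k j : ℕ) :
    ∫ z, z ^ k * conj (z ^ j) ∂arcMeasure = if k = j then (2 * Real.pi : ℂ) else 0 := by
  have hcont : Continuous (fun z : ℂ => z ^ k * conj (z ^ j)) := by
    exact (continuous_pow k).mul (Complex.continuous_conj.comp (continuous_pow j))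
  rw [integral_arc _ hcont]
  have hpt : ∀ θ : ℝ, Complex.exp (Complex.I * θ) ^ k * conj (Complex.exp (Complex.I * θ) ^ j)
      = Complex.exp ((Complex.I * ((((k : ℤ) - (j : ℤ)) : ℤ) : ℂ)) * θ) := by
    intro θ
    rw [← Complex.exp_nat_mul, ← Complex.exp_nat_mul, ← Complex.exp_conj, ← Complex.exp_add]
    congr 1
    have : conj ((j : ℂ) * (Complex.I * θ)) = (j : ℂ) * (-Complex.I * θ) := by
      simp [Complex.ext_iff]
    rw [this]
    push_cast
    ring
  simp_rw [hpt]
  rw [arc_exp_int]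
  by_cases h : k = j
  · simp [h]
  · rw [if_neg h, if_neg (by exact_mod_cast sub_ne_zero.mpr (by exact_mod_cast h : (k:ℤ) ≠ j))]

lemma cont_eval (p : Polynomial ℂ) : Continuous (fun z : ℂ => p.eval z) := p.continuous

lemma arc_ortho (p : Polynomial ℂ) (j : ℕ) :
    ∫ z, p.eval z * conj (z ^ j) ∂arcMeasure = (2 * Real.pi : ℂ) * p.coeff j := by
  set N := p.natDegree + 1 with hN
  have hev : ∀ z : ℂ, p.eval z * conj (z ^ j)
      = ∑ k ∈ Finset.range N, p.coeff k * (z ^ k * conj (z ^ j)) := by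
    intro z
    rw [Polynomial.eval_eq_sum_range, Finset.sum_mul]
    simp [mul_assoc, hN]
  simp_rw [hev]
  rw [integral_finset_sum]
  · have : ∀ k ∈ Finset.range N, ∫ z, p.coeff k * (z ^ k * conj (z ^ j)) ∂arcMeasure
        = p.coeff k * (if k = j then (2 * Real.pi : ℂ) else 0) := by
      intro k _
      rw [integral_const_mul, arc_monomial]
    rw [Finset.sum_congr rfl this]
    simp_rw [mul_ite, mul_zero]
    rw [Finset.sum_ite_eq' (Finset.range N) j (fun k => p.coeff k * (2 * Real.pi : ℂ))]
    by_cases hj : j < N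
    · rw [if_pos (Finset.mem_range.mpr hj)] ; ring
    · rw [if_neg (by simpa using hj)]
      have hc : p.coeff j = 0 := p.coeff_eq_zero_of_natDegree_lt (by omega)
      rw [hc, mul_zero]
  · intro k _
    apply integrable_arc
    exact continuous_const.mul ((continuous_pow k).mul
      (Complex.continuous_conj.comp (continuous_pow j)))

lemma arc_parseval (p : Polynomial ℂ) :
    ∫ z, ‖p.eval z‖ ^ 2 ∂arcMeasure
      = (2 * Real.pi) * ∑ k ∈ Finset.range (p.natDegree + 1), ‖p.coeff k‖ ^ 2 := by
  apply Complex.ofReal_injective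
  have h0 := integral_ofReal (𝕜 := ℂ) (f := fun z : ℂ => ‖p.eval z‖ ^ 2) (μ := arcMeasure)
  have h1 : ((∫ z, ‖p.eval z‖ ^ 2 ∂arcMeasure : ℝ) : ℂ)
      = ∫ z, p.eval z * conj (p.eval z) ∂arcMeasure := by
    rw [show ((∫ z, ‖p.eval z‖ ^ 2 ∂arcMeasure : ℝ) : ℂ)
        = ∫ x, ((‖p.eval x‖ ^ 2 : ℝ) : ℂ) ∂arcMeasure from h0.symm]
    apply integral_congr_ae
    filter_upwards with z
    rw [Complex.mul_conj, Complex.normSq_eq_norm_sq]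
  rw [h1]
  set N := p.natDegree + 1 with hN
  have hev : ∀ z : ℂ, p.eval z * conj (p.eval z)
      = ∑ k ∈ Finset.range N, ∑ i ∈ Finset.range N,
          (p.coeff k * conj (p.coeff i)) * (z ^ k * conj (z ^ i)) := by
    intro z
    conv_lhs => rw [Polynomial.eval_eq_sum_range]
    rw [map_sum, Finset.sum_mul_sum]
    apply Finset.sum_congr rfl; intro k _
    apply Finset.sum_congr rfl; intro i _
    rw [map_mul]
    ring
  simp_rw [hev]
  rw [integral_finset_sum]
  · have hrow : ∀ k ∈ Finset.range N,
        ∫ z, (∑ i ∈ Finset.range N, (p.coeff k * conj (p.coeff i)) * (z ^ k * conj (z ^ i))) ∂arcMeasure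
          = p.coeff k * conj (p.coeff k) * (2 * Real.pi : ℂ) := by
      intro k hk
      rw [integral_finset_sum]
      · have : ∀ i ∈ Finset.range N, ∫ z, (p.coeff k * conj (p.coeff i)) * (z ^ k * conj (z ^ i)) ∂arcMeasure
            = (p.coeff k * conj (p.coeff i)) * (if k = i then (2 * Real.pi : ℂ) else 0) := by
          intro i _
          rw [integral_const_mul, arc_monomial]
        rw [Finset.sum_congr rfl this]
        simp_rw [mul_ite, mul_zero]
        rw [Finset.sum_ite_eq (Finset.range N) k (fun i => p.coeff k * conj (p.coeff i) * (2 * Real.pi : ℂ))]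
        rw [if_pos hk]
      · intro i _
        exact integrable_arc _ (continuous_const.mul ((continuous_pow k).mul
          (Complex.continuous_conj.comp (continuous_pow i))))
    rw [Finset.sum_congr rfl hrow]
    push_cast
    rw [Finset.mul_sum]
    apply Finset.sum_congr rfl
    intro k _
    rw [Complex.mul_conj, Complex.normSq_eq_norm_sq]
    push_cast
    ring
  · intro k _
    apply integrable_arc
    apply continuous_finset_sum
    intro i _
    exact continuous_const.mul ((continuous_pow k).mul
      (Complex.continuous_conj.comp (continuous_pow i)))

lemma part_one (δ : ℝ) (hδ : 0 < δ) (n : ℕ) (μ : Measure ℂ)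
    (hSD : SteklovDensity δ μ) (φ : Polynomial ℂ) (hφ : IsOrthonormalPoly μ n φ)
    (z : ℂ) (hz : ‖z‖ = 1) : ‖φ.eval z‖ ≤ Real.sqrt ((n + 1) / δ) := by
  obtain ⟨hdeg, -, -, hnorm⟩ := hφ
  set S := ∑ k ∈ Finset.range (n+1), ‖φ.coeff k‖ ^ 2 with hS
  have hSnn : 0 ≤ S := Finset.sum_nonneg fun k _ => sq_nonneg _
  have h1 : ‖φ.eval z‖ ^ 2 ≤ (n+1) * S := by
    have he : φ.eval z = ∑ k ∈ Finset.range (n+1), φ.coeff k * z ^ k := by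
      conv_lhs => rw [Polynomial.eval_eq_sum_range, hdeg]
    have hb : ‖φ.eval z‖ ≤ ∑ k ∈ Finset.range (n+1), ‖φ.coeff k‖ := by
      rw [he]
      refine (norm_sum_le _ _).trans ?_
      apply Finset.sum_le_sum
      intro k _
      rw [norm_mul, norm_pow]
      simp [hz]
    calc ‖φ.eval z‖^2 ≤ (∑ k ∈ Finset.range (n+1), ‖φ.coeff k‖)^2 :=
          pow_le_pow_left₀ (norm_nonneg _) hb 2
      _ ≤ (Finset.range (n+1)).card * S := sq_sum_le_card_mul_sum_sq
      _ = (n+1) * S := by rw [hS]; push_cast [Finset.card_range]; ring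
  have hfint : Integrable (fun z => ‖φ.eval z‖ ^ 2) μ := by
    by_contra h
    rw [integral_undef h] at hnorm; norm_num at hnorm
  have hle : (ENNReal.ofReal (δ / (2 * Real.pi))) • arcMeasure ≤ μ := by
    rw [Measure.le_iff]
    intro A hA
    rw [Measure.smul_apply, smul_eq_mul]
    exact hSD A hA
  have hpi := Real.pi_pos
  have h2 : δ * S ≤ 1 := by
    have hmono := integral_mono_measure hle
      (Filter.Eventually.of_forall (fun x => sq_nonneg ‖φ.eval x‖)) hfint
    rw [hnorm, integral_smul_measure, arc_parseval, hdeg,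
      ENNReal.toReal_ofReal (by positivity)] at hmono
    calc δ * S = (δ / (2*Real.pi)) • (2 * Real.pi * S) := by
          rw [smul_eq_mul]; field_simp
      _ ≤ 1 := hmono
  have h3 : ‖φ.eval z‖ ^ 2 ≤ (n+1)/δ := by
    have : (n+1 : ℝ) * S = ((n+1)/δ) * (δ * S) := by field_simp
    calc ‖φ.eval z‖^2 ≤ (n+1) * S := h1
      _ = ((n+1)/δ) * (δ * S) := this
      _ ≤ ((n+1)/δ) * 1 := by
          apply mul_le_mul_of_nonneg_left h2 (by positivity)
      _ = (n+1)/δ := mul_one _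
  calc ‖φ.eval z‖ = Real.sqrt (‖φ.eval z‖^2) := (Real.sqrt_sq (norm_nonneg _)).symm
    _ ≤ Real.sqrt ((n+1)/δ) := Real.sqrt_le_sqrt h3

lemma integrable_dirac' {E : Type*} [NormedAddCommGroup E] {f : ℂ → E} (hf : Continuous f)
    (a : ℂ) : Integrable f (Measure.dirac a) := by
  refine ⟨hf.aestronglyMeasurable, ?_⟩
  unfold HasFiniteIntegral
  rw [lintegral_dirac]
  exact ENNReal.coe_lt_top

lemma geom_zero (n : ℕ) (w : ℂ) (hpow : w ^ (n+1) = 1) (hw : w ≠ 1) :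
    ∑ k ∈ Finset.range (n+1), w ^ k = 0 := by
  rw [geom_sum_eq hw, hpow]
  simp

lemma sum_Icc_geom (n : ℕ) (w : ℂ) (hpow : w ^ (n+1) = 1) (hw : w ≠ 1) :
    ∑ m ∈ Finset.Icc 1 n, w ^ m = -1 := by
  have h0 : ∑ k ∈ Finset.range (n+1), w ^ k = 0 := geom_zero n w hpow hw
  have : Finset.range (n+1) = insert 0 (Finset.Icc 1 n) := by
    ext k
    simp [Finset.mem_range, Finset.mem_Icc, Nat.lt_succ_iff]
    omega
  rw [this, Finset.sum_insert (by simp)] at h0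
  simpa using by linear_combination h0

noncomputable def zeta (n : ℕ) : ℂ := Complex.exp (2 * Real.pi * Complex.I / (n+1))

lemma zeta_prim (n : ℕ) : IsPrimitiveRoot (zeta n) (n+1) := by
  have := Complex.isPrimitiveRoot_exp (n+1) (by omega)
  have he : (2 * (Real.pi:ℂ) * Complex.I / ((n:ℂ)+1)) = 2 * (Real.pi:ℂ) * Complex.I / ((n+1 : ℕ) : ℂ) := by
    push_cast; ring
  rw [zeta, he]
  exact this

lemma zeta_pow_top (n : ℕ) : (zeta n) ^ (n+1) = 1 := (zeta_prim n).pow_eq_one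

lemma zeta_pow_ne_one (n : ℕ) {m : ℕ} (h1 : 1 ≤ m) (h2 : m ≤ n) : (zeta n) ^ m ≠ 1 :=
  (zeta_prim n).pow_ne_one_of_pos_of_lt (by omega) (by omega)

lemma zeta_abs (n : ℕ) : ‖zeta n‖ = 1 := by
  rw [zeta]
  have : (2 * Real.pi * Complex.I / (n+1)) = ((2 * Real.pi / (n+1) : ℝ) : ℂ) * Complex.I := by
    push_cast; ring
  rw [this, Complex.norm_exp_ofReal_mul_I]

lemma zeta_pow_abs (n m : ℕ) : ‖(zeta n) ^ m‖ = 1 := by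
  rw [norm_pow, zeta_abs, one_pow]

lemma zeta_conj (n m : ℕ) : ((zeta n) ^ m) ^ n = conj ((zeta n) ^ m) := by
  have h1 : (zeta n) ^ m * ((zeta n) ^ m) ^ n = 1 := by
    rw [← pow_succ']
    rw [← pow_mul]
    rw [mul_comm m (n+1), pow_mul, zeta_pow_top, one_pow]
  have h2 : conj ((zeta n) ^ m) = ((zeta n) ^ m)⁻¹ := by
    rw [← Complex.inv_eq_conj]
    rw [zeta_pow_abs]
  rw [h2]
  exact eq_inv_of_mul_eq_one_right h1

noncomputable def muC (δ t : ℝ) (n : ℕ) : Measure ℂ :=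
  ENNReal.ofReal (δ/(2*Real.pi)) • arcMeasure
    + ∑ m ∈ Finset.Icc 1 n, ENNReal.ofReal t • Measure.dirac ((zeta n)^m)

lemma muC_finite (δ t : ℝ) (n : ℕ) : IsFiniteMeasure (muC δ t n) := by
  constructor
  rw [muC, Measure.add_apply, Measure.finset_sum_apply]
  apply ENNReal.add_lt_top.mpr
  constructor
  · rw [Measure.smul_apply, smul_eq_mul]
    exact ENNReal.mul_lt_top ENNReal.ofReal_lt_top (measure_lt_top arcMeasure _)
  · apply ENNReal.sum_lt_top.mpr
    intro m _
    rw [Measure.smul_apply, smul_eq_mul]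
    exact ENNReal.mul_lt_top ENNReal.ofReal_lt_top (measure_lt_top _ _)

lemma circle_set_meas : MeasurableSet {z : ℂ | ‖z‖ ≠ 1} := by
  have : {z : ℂ | ‖z‖ ≠ 1} = ((fun z : ℂ => ‖z‖) ⁻¹' {1})ᶜ := by
    ext z; simp
  rw [this]
  exact (continuous_norm.measurable (measurableSet_singleton 1)).compl

lemma arc_onCircle : OnCircle arcMeasure := by
  unfold OnCircle
  rw [arcMeasure, Measure.map_apply mexp_meas circle_set_meas]
  have : (fun θ : ℝ => Complex.exp (Complex.I * θ)) ⁻¹' {z : ℂ | ‖z‖ ≠ 1} = ∅ := by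
    ext θ
    simp [Complex.norm_exp]
  rw [this]
  simp

lemma muC_onCircle (δ t : ℝ) (n : ℕ) : OnCircle (muC δ t n) := by
  unfold OnCircle
  rw [muC, Measure.add_apply, Measure.finset_sum_apply]
  have h1 : (ENNReal.ofReal (δ/(2*Real.pi)) • arcMeasure) {z : ℂ | ‖z‖ ≠ 1} = 0 := by
    rw [Measure.smul_apply, arc_onCircle, smul_zero]
  rw [h1, zero_add]
  apply Finset.sum_eq_zero
  intro m _
  rw [Measure.smul_apply, Measure.dirac_apply' _ circle_set_meas]
  have : (zeta n) ^ m ∉ {z : ℂ | ‖z‖ ≠ 1} := by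
    simp only [Set.mem_setOf_eq, ne_eq, not_not, zeta_pow_abs]
  rw [Set.indicator_of_notMem this, smul_zero]

lemma muC_steklov (δ t : ℝ) (n : ℕ) : SteklovDensity δ (muC δ t n) := by
  intro A hA
  rw [muC, Measure.add_apply, Measure.smul_apply, smul_eq_mul]
  exact le_add_right le_rfl

lemma integral_muC {E : Type*} [NormedAddCommGroup E] [NormedSpace ℝ E] [CompleteSpace E]
    (δ t : ℝ) (hδ : 0 ≤ δ) (ht : 0 ≤ t) (n : ℕ) (f : ℂ → E) (hf : Continuous f) :
    ∫ z, f z ∂(muC δ t n)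
      = (δ/(2*Real.pi)) • ∫ z, f z ∂arcMeasure
        + ∑ m ∈ Finset.Icc 1 n, t • f ((zeta n)^m) := by
  have h1 : Integrable f (ENNReal.ofReal (δ/(2*Real.pi)) • arcMeasure) :=
    (integrable_arc f hf).smul_measure ENNReal.ofReal_ne_top
  have h2 : ∀ m ∈ Finset.Icc 1 n,
      Integrable f (ENNReal.ofReal t • Measure.dirac ((zeta n)^m)) := fun m _ =>
    (integrable_dirac' hf _).smul_measure ENNReal.ofReal_ne_top
  rw [muC, integral_add_measure h1 (integrable_finset_sum_measure.2 h2),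
    integral_smul_measure, integral_finset_sum_measure h2]
  rw [ENNReal.toReal_ofReal (by positivity)]
  congr 1
  apply Finset.sum_congr rfl
  intro m _
  rw [integral_smul_measure, integral_dirac, ENNReal.toReal_ofReal ht]

noncomputable def phiC (b c : ℝ) (n : ℕ) : Polynomial ℂ :=
  C (b : ℂ) * X^n + C (c : ℂ) * (∑ k ∈ Finset.range n, X^k)

lemma phiC_coeff (b c : ℝ) (n k : ℕ) :
    (phiC b c n).coeff k = if k = n then (b : ℂ) else if k < n then (c : ℂ) else 0 := by
  rw [phiC, Polynomial.coeff_add, Polynomial.coeff_C_mul, Polynomial.coeff_X_pow,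
    Polynomial.coeff_C_mul, Polynomial.finset_sum_coeff]
  simp_rw [Polynomial.coeff_X_pow]
  rw [Finset.sum_ite_eq (Finset.range n) k (fun _ => (1:ℂ))]
  by_cases h1 : k = n
  · subst h1
    simp
  · by_cases h2 : k < n
    · simp [h1, h2, Finset.mem_range]
    · simp [h1, h2, Finset.mem_range]

lemma phiC_natDegree (b c : ℝ) (hb : b ≠ 0) (n : ℕ) : (phiC b c n).natDegree = n := by
  apply le_antisymm
  · apply (Polynomial.natDegree_add_le _ _).trans
    rw [max_le_iff]
    constructor
    · exact (Polynomial.natDegree_C_mul_le _ _).trans (by simp)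
    · refine (Polynomial.natDegree_C_mul_le _ _).trans ?_
      apply Polynomial.natDegree_sum_le_of_forall_le
      intro i hi
      simp only [Polynomial.natDegree_X_pow]
      exact (Finset.mem_range.mp hi).le
  · apply Polynomial.le_natDegree_of_ne_zero
    rw [phiC_coeff, if_pos rfl]
    exact_mod_cast hb

lemma phiC_eval (b c : ℝ) (n : ℕ) (z : ℂ) :
    (phiC b c n).eval z = (b : ℂ) * z^n + (c : ℂ) * ∑ k ∈ Finset.range n, z^k := by
  rw [phiC]
  simp [Polynomial.eval_finset_sum]

lemma zeta_pow_pow (n m : ℕ) : ((zeta n)^m) ^ (n+1) = 1 := by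
  rw [← pow_mul, mul_comm m (n+1), pow_mul, zeta_pow_top, one_pow]

lemma phiC_eval_zeta (b c : ℝ) (n : ℕ) {m : ℕ} (h1 : 1 ≤ m) (h2 : m ≤ n) :
    (phiC b c n).eval ((zeta n)^m) = ((b : ℂ) - c) * conj ((zeta n)^m) := by
  rw [phiC_eval]
  set w := (zeta n)^m with hw
  have hsum : ∑ k ∈ Finset.range (n+1), w^k = 0 :=
    geom_zero n w (zeta_pow_pow n m) (zeta_pow_ne_one n h1 h2)
  rw [Finset.sum_range_succ] at hsum
  have hrange : ∑ k ∈ Finset.range n, w^k = - w^n := by linear_combination hsum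
  rw [hrange, ← zeta_conj n m, ← hw]
  ring

lemma sum_conj_zeta (n j : ℕ) (hj : j < n) :
    ∑ m ∈ Finset.Icc 1 n, conj ((zeta n)^m) * conj ((zeta n)^m)^j = -1 := by
  have hterm : ∀ m : ℕ, conj ((zeta n)^m) * conj ((zeta n)^m)^j
      = (conj ((zeta n)^(j+1)))^m := by
    intro m
    rw [← map_pow, ← map_pow, ← map_mul]
    congr 1
    rw [← pow_succ', ← pow_mul, ← pow_mul]
    congr 1
    ring
  simp_rw [hterm]
  apply sum_Icc_geom
  · rw [← map_pow, ← pow_mul, mul_comm (j+1) (n+1), pow_mul, zeta_pow_top, one_pow, map_one]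
  · intro h
    have : (zeta n)^(j+1) = 1 := by
      have := congrArg conj h
      rwa [Complex.conj_conj, map_one] at this
    exact zeta_pow_ne_one n (by omega) (by omega) this

lemma part_two (δ : ℝ) (hδ : 0 < δ) (n : ℕ) (t : ℝ) (ht : 0 < t) :
    ∃ μ : Measure ℂ, ∃ φ : Polynomial ℂ,
      IsFiniteMeasure μ ∧ OnCircle μ ∧ SteklovDensity δ μ ∧ IsOrthonormalPoly μ n φ ∧
        ‖φ.eval 1‖ = Real.sqrt (((n+1)*t+δ)/(δ*(δ+t))) := by
  have hπ := Real.pi_pos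
  set b : ℝ := Real.sqrt ((δ+t) / (δ*((n+1)*t+δ))) with hbdef
  have hδt : 0 < δ + t := by linarith
  have hD : 0 < δ*((n+1)*t+δ) := by positivity
  have hbpos : 0 < b := Real.sqrt_pos.mpr (by positivity)
  have hbsq : b^2 = (δ+t) / (δ*((n+1)*t+δ)) := Real.sq_sqrt (by positivity)
  set c : ℝ := t * b / (δ+t) with hcdef
  have hcpos : 0 ≤ c := by positivity
  have hbc : 0 < b - c := by
    rw [hcdef, sub_pos, div_lt_iff₀ hδt]
    nlinarith
  refine ⟨muC δ t n, phiC b c n, muC_finite _ _ _, muC_onCircle _ _ _, muC_steklov _ _ _, ?_, ?_⟩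
  · refine ⟨phiC_natDegree b c (ne_of_gt hbpos) n,
      ⟨b, hbpos, by rw [phiC_coeff, if_pos rfl]⟩, ?_, ?_⟩
    · -- orthogonality
      intro j hj
      have hcont : Continuous (fun z : ℂ => (phiC b c n).eval z * conj (z^j)) :=
        (phiC b c n).continuous.mul (Complex.continuous_conj.comp (continuous_pow j))
      rw [integral_muC δ t hδ.le ht.le n _ hcont, arc_ortho, phiC_coeff,
        if_neg (by omega), if_pos hj]
      have hterm : ∀ m ∈ Finset.Icc 1 n,
          (t : ℝ) • ((phiC b c n).eval ((zeta n)^m) * conj (((zeta n)^m)^j))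
            = (t * (b - c) : ℝ) • (conj ((zeta n)^m) * conj ((zeta n)^m)^j) := by
        intro m hm
        obtain ⟨h1, h2⟩ := Finset.mem_Icc.mp hm
        rw [phiC_eval_zeta b c n h1 h2, map_pow, Complex.real_smul, Complex.real_smul]
        push_cast
        simp only [map_pow]
        ring
      rw [Finset.sum_congr rfl hterm, ← Finset.smul_sum, sum_conj_zeta n j hj,
        Complex.real_smul, Complex.real_smul]
      have hreal : δ / (2*Real.pi) * (2*Real.pi * c) - t*(b-c) = 0 := by
        rw [hcdef]; field_simp; ring
      push_cast
      have hπc : ((Real.pi : ℝ) : ℂ) ≠ 0 := by exact_mod_cast Real.pi_ne_zero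
      have := congrArg (fun x : ℝ => (x : ℂ)) hreal
      push_cast at this
      rw [mul_neg_one]
      rw [sub_eq_zero] at this
      rw [this]
      ring
    · -- normalization
      have hcont : Continuous (fun z : ℂ => ‖(phiC b c n).eval z‖^2) := by
        have := (phiC b c n).continuous
        continuity
      rw [integral_muC δ t hδ.le ht.le n _ hcont, arc_parseval,
        phiC_natDegree b c (ne_of_gt hbpos) n]
      have hsumcoeff : ∑ k ∈ Finset.range (n+1), ‖(phiC b c n).coeff k‖^2
          = n * c^2 + b^2 := by
        rw [Finset.sum_range_succ, phiC_coeff, if_pos rfl]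
        have hrow : ∀ k ∈ Finset.range n, ‖(phiC b c n).coeff k‖^2 = c^2 := by
          intro k hk
          have hk' := Finset.mem_range.mp hk
          rw [phiC_coeff, if_neg (by omega : ¬ k = n), if_pos hk']
          rw [Complex.norm_real, Real.norm_eq_abs, sq_abs]
        rw [Finset.sum_congr rfl hrow, Finset.sum_const, Finset.card_range]
        rw [Complex.norm_real, Real.norm_eq_abs, sq_abs]
        push_cast
        ring
      have hnormzeta : ∀ m ∈ Finset.Icc 1 n,
          (t : ℝ) • ‖(phiC b c n).eval ((zeta n)^m)‖^2 = t * (b-c)^2 := by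
        intro m hm
        obtain ⟨h1, h2⟩ := Finset.mem_Icc.mp hm
        rw [phiC_eval_zeta b c n h1 h2, norm_mul, smul_eq_mul]
        have habs : ‖conj ((zeta n)^m)‖ = 1 := by
          rw [RCLike.norm_conj, zeta_pow_abs]
        rw [habs, mul_one]
        have : ‖((b : ℂ) - c)‖ = b - c := by
          rw [show ((b:ℂ) - c) = ((b - c : ℝ) : ℂ) by push_cast; ring,
            Complex.norm_real, Real.norm_eq_abs, abs_of_pos hbc]
        rw [this]
      rw [hsumcoeff, Finset.sum_congr rfl hnormzeta, Finset.sum_const, Nat.card_Icc]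
      simp only [smul_eq_mul, nsmul_eq_mul, Nat.add_sub_cancel]
      have key : δ / (2*Real.pi) * (2*Real.pi * ((n:ℝ) * c^2 + b^2)) + (n:ℝ) * (t*(b-c)^2)
          = b^2 * (δ*(((n:ℝ)+1)*t+δ)/(δ+t)) := by
        rw [hcdef]; field_simp; ring
      rw [key, hbsq]
      field_simp
  · rw [phiC_eval]
    simp only [one_pow, Finset.sum_const, Finset.card_range, nsmul_eq_mul, mul_one]
    have hcast : (b:ℂ) + (c:ℂ) * ((n:ℂ)) = ((b + c * n : ℝ) : ℂ) := by push_cast; ring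
    rw [hcast, Complex.norm_real, Real.norm_eq_abs, abs_of_pos (by positivity)]
    rw [← Real.sqrt_sq (by positivity : (0:ℝ) ≤ b + c*n)]
    congr 1
    have expand : (b + c*n)^2 = b^2 * ((((n:ℝ)+1)*t+δ)^2/(δ+t)^2) := by
      rw [hcdef]; field_simp; ring
    rw [expand, hbsq]
    field_simp


/-- dropping the probability normalization, the extremal quantity
`\tilde M_{n,δ}` equals `√((n+1)/δ)`: every admissible measure gives
`‖φ_n‖_{L^∞(𝕋)} ≤ √((n+1)/δ)`, and the value is approached arbitrarily closely. -/
theorem modified_extremal_value (δ : ℝ) (hδ : 0 < δ) (n : ℕ) :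
    (∀ μ : Measure ℂ, IsFiniteMeasure μ → OnCircle μ → SteklovDensity δ μ →
      ∀ φ, IsOrthonormalPoly μ n φ →
        ∀ z : ℂ, ‖z‖ = 1 → ‖φ.eval z‖ ≤ Real.sqrt ((n + 1) / δ)) ∧
    (∀ ε > 0, ∃ μ : Measure ℂ, ∃ φ : Polynomial ℂ,
      IsFiniteMeasure μ ∧ OnCircle μ ∧ SteklovDensity δ μ ∧ IsOrthonormalPoly μ n φ ∧
        Real.sqrt ((n + 1) / δ) - ε < ‖φ.eval 1‖) := by
  constructor
  · intro μ _ _ hSD φ hφ z hz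
    exact part_one δ hδ n μ hSD φ hφ z hz
  · intro ε hε
    set K := Real.sqrt (((n:ℝ) + 1) / δ) with hKdef
    have hK : 0 ≤ K := Real.sqrt_nonneg _
    set t := (K * δ + 1) / ε with ht_def
    have ht : 0 < t := by positivity
    have htδ : 0 < t + δ := by linarith
    have hεt : ε * t = K * δ + 1 := by rw [ht_def]; field_simp
    obtain ⟨μ, φ, h1, h2, h3, h4, h5⟩ := part_two δ hδ n t ht
    refine ⟨μ, φ, h1, h2, h3, h4, ?_⟩
    rw [h5]
    have hx : (0:ℝ) ≤ t/(t+δ) := by positivity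
    have hx1 : t/(t+δ) ≤ 1 := by rw [div_le_one htδ]; linarith
    have hstep0 : t/(t+δ) ≤ Real.sqrt (t/(t+δ)) := by
      nlinarith [Real.sq_sqrt hx, Real.sqrt_nonneg (t/(t+δ)),
        sq_nonneg (Real.sqrt (t/(t+δ)) - 1)]
    have hstep1 : K * (t/(t+δ)) ≤ K * Real.sqrt (t/(t+δ)) :=
      mul_le_mul_of_nonneg_left hstep0 hK
    have hstep2 : K * Real.sqrt (t/(t+δ)) = Real.sqrt (((n:ℝ)+1)/δ * (t/(t+δ))) :=
      (Real.sqrt_mul (by positivity) _).symm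
    have hstep3 : ((n:ℝ)+1)/δ * (t/(t+δ)) ≤ (((n:ℝ)+1)*t+δ)/(δ*(δ+t)) := by
      have heq : ((n:ℝ)+1)/δ * (t/(t+δ)) = (((n:ℝ)+1)*t)/(δ*(δ+t)) := by
        rw [div_mul_div_comm, add_comm t δ]
      rw [heq]
      apply div_le_div_of_nonneg_right ?_ (by positivity)
      · linarith
    have hstep4 : K * (t/(t+δ)) ≤ Real.sqrt ((((n:ℝ)+1)*t+δ)/(δ*(δ+t))) := by
      calc K * (t/(t+δ)) ≤ K * Real.sqrt (t/(t+δ)) := hstep1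
        _ = Real.sqrt (((n:ℝ)+1)/δ * (t/(t+δ))) := hstep2
        _ ≤ Real.sqrt ((((n:ℝ)+1)*t+δ)/(δ*(δ+t))) := Real.sqrt_le_sqrt hstep3
    have hstep5 : K - ε < K * (t/(t+δ)) := by
      rw [mul_div_assoc', lt_div_iff₀ htδ]
      nlinarith [hεt, mul_pos hε hδ]
    linarith
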